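/- Let x ∈ E with h(x) = 0 and Dh(x) surjective, and let β ≥ 0. Then for every v ∈ ker Dh(x), ⟨v, ∇²g(x)[v]⟩ = ⟨v, ∇²f(x)[v]⟩ − Σ_{i=1}^m λ_i(x)·⟨v, ∇²h_i(x)[v]⟩; i.e., the restriction of ∇²g(x) to ker Dh(x) equals the Riemannian Hessian of f on M at x. Consequently, if ∇²g(x) ⪰ −ε₂·Id on E, then ⟨v, (∇²f(x) − Σᵢ λ_i(x)∇²h_i(x))[v]⟩ ≥ −ε₂‖v‖² for all v ∈ ker Dh(x); and if ∇²g(x) is positive definite, then the Riemannian Hessian of f on M at x is positive definite. -/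

import Mathlib

open scoped RealInnerProductSpace ContDiff
open Topology Filter

noncomputable section

variable {E : Type*} [NormedAddCommGroup E] [InnerProductSpace ℝ E] [FiniteDimensional ℝ E] {m : ℕ}

/-- The least-squares multipliers `λ(x) = (Dh(x) ∘ Dh(x)*)⁻¹ (Dh(x)[∇f(x)]) = (Dh(x)*)† ∇f(x)`.
(When `Dh(x)` is surjective, `Dh(x) ∘ Dh(x)*` is bijective and `Function.invFun` returns
its genuine inverse applied to `Dh(x)[∇f(x)]`.) -/
def lam (f : E → ℝ) (h : E → EuclideanSpace ℝ (Fin m)) (x : E) : EuclideanSpace ℝ (Fin m) :=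
  Function.invFun
    (fun y => fderiv ℝ h x (ContinuousLinearMap.adjoint (fderiv ℝ h x) y))
    (fderiv ℝ h x (gradient f x))

/-- Fletcher's augmented Lagrangian `g(x) = f(x) − ⟪λ(x), h(x)⟫ + β‖h(x)‖²`. -/
def flal (f : E → ℝ) (h : E → EuclideanSpace ℝ (Fin m)) (β : ℝ) (x : E) : ℝ :=
  f x - ⟪lam f h x, h x⟫ + β * ‖h x‖ ^ 2

/-- The smallest singular value `σ_min(A) = min_{‖y‖=1} ‖A*[y]‖` of a linear map. -/
def sigmaMin (A : E →L[ℝ] EuclideanSpace ℝ (Fin m)) : ℝ :=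
  sInf ((fun y => ‖ContinuousLinearMap.adjoint A y‖) '' {y : EuclideanSpace ℝ (Fin m) | ‖y‖ = 1})

/-- `C_λ(x) = ‖Dλ(x)‖`, the operator norm of the derivative of the multipliers. -/
def Clam (f : E → ℝ) (h : E → EuclideanSpace ℝ (Fin m)) (x : E) : ℝ :=
  ‖fderiv ℝ (lam f h) x‖

/-- `β₁(x) = σ₁(Dh(x))·C_λ(x) / (2σ_min(Dh(x))²)`. -/
def beta1 (f : E → ℝ) (h : E → EuclideanSpace ℝ (Fin m)) (x : E) : ℝ :=
  ‖fderiv ℝ h x‖ * Clam f h x / (2 * sigmaMin (fderiv ℝ h x) ^ 2)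

/-- `β₂(x) = C_λ(x)/σ_min(Dh(x))`. -/
def beta2 (f : E → ℝ) (h : E → EuclideanSpace ℝ (Fin m)) (x : E) : ℝ :=
  Clam f h x / sigmaMin (fderiv ℝ h x)

/-- `β₃(x) = 1/σ_min(Dh(x))`. -/
def beta3 (h : E → EuclideanSpace ℝ (Fin m)) (x : E) : ℝ :=
  1 / sigmaMin (fderiv ℝ h x)

namespace FletcherAux

lemma coe_le_inf (n : ℕ∞) : ((n : WithTop ℕ∞)) ≤ ∞ := WithTop.coe_le_coe.mpr le_top

lemma two_one_le_inf : (2 : WithTop ℕ∞) + 1 ≤ ∞ := by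
  rw [show (2 : WithTop ℕ∞) + 1 = ((3:ℕ∞) : WithTop ℕ∞) from rfl]
  exact coe_le_inf 3

lemma two_le_inf : (2 : WithTop ℕ∞) ≤ ∞ := by
  rw [show (2 : WithTop ℕ∞) = ((2:ℕ∞) : WithTop ℕ∞) from rfl]
  exact coe_le_inf 2

lemma two_ne_inf : (2 : WithTop ℕ∞) ≠ ∞ := by
  rw [show (2 : WithTop ℕ∞) = ((2:ℕ∞) : WithTop ℕ∞) from rfl]
  intro hcon
  exact absurd (WithTop.coe_inj.mp hcon) (by decide)

lemma one_one_le_two : (1 : WithTop ℕ∞) + 1 ≤ 2 := by norm_num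

/-- Realify a conjugate-linear isometry equivalence over `ℝ`. -/
def realify {G H : Type*} [NormedAddCommGroup G] [NormedAddCommGroup H]
    [NormedSpace ℝ G] [NormedSpace ℝ H] (φ : G ≃ₗᵢ⋆[ℝ] H) : G ≃ₗᵢ[ℝ] H where
  toLinearEquiv :=
  { toFun := φ
    map_add' := map_add φ
    map_smul' := fun r g => by simp [starRingEnd_apply]
    invFun := φ.symm
    left_inv := φ.symm_apply_apply
    right_inv := φ.apply_symm_apply }
  norm_map' := φ.norm_map

theorem lam_contDiffAt (f : E → ℝ) (h : E → EuclideanSpace ℝ (Fin m))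
    (hf : ContDiff ℝ ∞ f) (hh : ContDiff ℝ ∞ h) (x : E)
    (hsurj : Function.Surjective (fderiv ℝ h x)) :
    ContDiffAt ℝ 2 (lam f h) x := by
  set A : E → EuclideanSpace ℝ (Fin m) →L[ℝ] EuclideanSpace ℝ (Fin m) :=
    fun y => (fderiv ℝ h y).comp (ContinuousLinearMap.adjoint (fderiv ℝ h y)) with hAdef
  set b : E → EuclideanSpace ℝ (Fin m) := fun y => fderiv ℝ h y (gradient f y) with hbdef
  have hDh : ContDiff ℝ 2 (fun y => fderiv ℝ h y) := hh.fderiv_right two_one_le_inf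
  have hadj : ContDiff ℝ 2 (fun y => ContinuousLinearMap.adjoint (fderiv ℝ h y)) :=
    (realify (ContinuousLinearMap.adjoint (𝕜 := ℝ) (E := E)
      (F := EuclideanSpace ℝ (Fin m)))).contDiff.comp hDh
  have hA : ContDiff ℝ 2 A := hDh.clm_comp hadj
  have hgrad : ContDiff ℝ 2 (gradient f) :=
    (realify (InnerProductSpace.toDual ℝ E).symm).contDiff.comp (hf.fderiv_right two_one_le_inf)
  have hb : ContDiff ℝ 2 b := hDh.clm_apply hgrad
  have hadj_inj : ∀ y : EuclideanSpace ℝ (Fin m),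
      ContinuousLinearMap.adjoint (fderiv ℝ h x) y = 0 → y = 0 := by
    intro y hy
    have h0 : ∀ u : E, ⟪y, fderiv ℝ h x u⟫ = 0 := by
      intro u
      rw [← ContinuousLinearMap.adjoint_inner_left, hy, inner_zero_left]
    obtain ⟨u, hu⟩ := hsurj y
    have := h0 u
    rw [hu, inner_self_eq_zero] at this
    exact this
  have hinj : Function.Injective (A x) := by
    intro z w hzw
    have hz : A x (z - w) = 0 := by rw [map_sub, hzw, sub_self]
    have : ⟪ContinuousLinearMap.adjoint (fderiv ℝ h x) (z - w),
        ContinuousLinearMap.adjoint (fderiv ℝ h x) (z - w)⟫ = 0 := by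
      rw [ContinuousLinearMap.adjoint_inner_left]
      have : fderiv ℝ h x (ContinuousLinearMap.adjoint (fderiv ℝ h x) (z - w)) = A x (z - w) := rfl
      rw [this, hz, inner_zero_right]
    rw [inner_self_eq_zero] at this
    have := hadj_inj _ this
    exact sub_eq_zero.mp this
  have hbij : Function.Bijective (A x) := by
    refine ⟨hinj, ?_⟩
    have := LinearMap.injective_iff_surjective
      (f := (A x : EuclideanSpace ℝ (Fin m) →ₗ[ℝ] EuclideanSpace ℝ (Fin m)))
    exact this.mp hinj
  have hu : IsUnit (A x) := ContinuousLinearMap.isUnit_iff_bijective.mpr hbij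
  have hg : ContDiffAt ℝ 2 (fun y => Ring.inverse (A y) (b y)) x := by
    have hinv : ContDiffAt ℝ 2
        (Ring.inverse : (EuclideanSpace ℝ (Fin m) →L[ℝ] EuclideanSpace ℝ (Fin m)) → _) (A x) := by
      rw [← hu.unit_spec]
      exact contDiffAt_ringInverse ℝ hu.unit
    exact (hinv.comp x hA.contDiffAt).clm_apply hb.contDiffAt
  have hev : ∀ᶠ y in 𝓝 x, IsUnit (A y) :=
    hA.continuous.continuousAt.preimage_mem_nhds (Units.isOpen.mem_nhds hu)
  have heq : lam f h =ᶠ[𝓝 x] fun y => Ring.inverse (A y) (b y) := by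
    filter_upwards [hev] with y hy
    have hbij' : Function.Bijective (A y) := ContinuousLinearMap.isUnit_iff_bijective.mp hy
    have h1 : A y (Ring.inverse (A y) (b y)) = b y := by
      have hmul : A y * Ring.inverse (A y) = 1 := Ring.mul_inverse_cancel (A y) hy
      calc A y (Ring.inverse (A y) (b y)) = (A y * Ring.inverse (A y)) (b y) := rfl
        _ = b y := by rw [hmul]; rfl
    have h2 : A y (Function.invFun (⇑(A y)) (b y)) = b y :=
      Function.invFun_eq (hbij'.surjective (b y))
    have h3 : lam f h y = Function.invFun (⇑(A y)) (b y) := rfl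
    rw [h3]
    exact hbij'.injective (h2.trans h1.symm)
  exact hg.congr_of_eventuallyEq heq

lemma hD2 {p : E → ℝ} {x : E} (hp : ContDiffAt ℝ 2 p x) :
    DifferentiableAt ℝ (fderiv ℝ p) x :=
  (hp.fderiv_right one_one_le_two).differentiableAt one_ne_zero

lemma hD1ev {p : E → ℝ} {x : E} (hp : ContDiffAt ℝ 2 p x) :
    ∀ᶠ y in 𝓝 x, DifferentiableAt ℝ p y := by
  filter_upwards [hp.eventually two_ne_inf] with y hy
  exact hy.differentiableAt two_ne_zero

theorem iFD2_add {p q : E → ℝ} {x : E} (hp : ContDiffAt ℝ 2 p x) (hq : ContDiffAt ℝ 2 q x)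
    (v w : E) :
    iteratedFDeriv ℝ 2 (fun y => p y + q y) x ![v, w] =
      iteratedFDeriv ℝ 2 p x ![v, w] + iteratedFDeriv ℝ 2 q x ![v, w] := by
  have heq : fderiv ℝ (fun y => p y + q y) =ᶠ[𝓝 x]
      fun y => fderiv ℝ p y + fderiv ℝ q y := by
    filter_upwards [hD1ev hp, hD1ev hq] with y hpy hqy
    exact fderiv_add hpy hqy
  simp only [iteratedFDeriv_two_apply]
  rw [heq.fderiv_eq, fderiv_fun_add (hD2 hp) (hD2 hq)]
  simp

theorem iFD2_const_mul {p : E → ℝ} {x : E} (hp : ContDiffAt ℝ 2 p x) (c : ℝ) (v w : E) :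
    iteratedFDeriv ℝ 2 (fun y => c * p y) x ![v, w] =
      c * iteratedFDeriv ℝ 2 p x ![v, w] := by
  have heq : fderiv ℝ (fun y => c * p y) =ᶠ[𝓝 x] fun y => c • fderiv ℝ p y := by
    filter_upwards [hD1ev hp] with y hpy
    exact fderiv_const_mul hpy c
  simp only [iteratedFDeriv_two_apply]
  rw [heq.fderiv_eq, fderiv_fun_const_smul (hD2 hp) c]
  simp

theorem iFD2_sub {p q : E → ℝ} {x : E} (hp : ContDiffAt ℝ 2 p x) (hq : ContDiffAt ℝ 2 q x)
    (v w : E) :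
    iteratedFDeriv ℝ 2 (fun y => p y - q y) x ![v, w] =
      iteratedFDeriv ℝ 2 p x ![v, w] - iteratedFDeriv ℝ 2 q x ![v, w] := by
  have h1 : (fun y => p y - q y) = fun y => p y + (-1) * q y := by funext y; ring
  rw [h1, iFD2_add hp (by exact (contDiffAt_const (c := (-1:ℝ))).mul hq) v w,
    iFD2_const_mul hq (-1) v w]
  ring

theorem iFD2_mul {p q : E → ℝ} {x : E} (hp : ContDiffAt ℝ 2 p x) (hq : ContDiffAt ℝ 2 q x)
    (v : E) (hq0 : q x = 0) (hq1 : fderiv ℝ q x v = 0) :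
    iteratedFDeriv ℝ 2 (fun y => p y * q y) x ![v, v] =
      p x * iteratedFDeriv ℝ 2 q x ![v, v] := by
  have heq : fderiv ℝ (fun y => p y * q y) =ᶠ[𝓝 x]
      fun y => p y • fderiv ℝ q y + q y • fderiv ℝ p y := by
    filter_upwards [hD1ev hp, hD1ev hq] with y hpy hqy
    exact fderiv_mul hpy hqy
  have hdp : DifferentiableAt ℝ p x := hp.differentiableAt two_ne_zero
  have hdq : DifferentiableAt ℝ q x := hq.differentiableAt two_ne_zero
  simp only [iteratedFDeriv_two_apply]
  rw [heq.fderiv_eq, fderiv_fun_add (f := fun y => p y • fderiv ℝ q y) (g := fun y => q y • fderiv ℝ p y) (hdp.smul (hD2 hq)) (hdq.smul (hD2 hp)),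
    fderiv_fun_smul hdp (hD2 hq), fderiv_fun_smul hdq (hD2 hp)]
  simp [hq0, hq1, ContinuousLinearMap.smulRight_apply, smul_eq_mul]

theorem iFD2_sum {ι : Type*} [DecidableEq ι] (s : Finset ι) (p : ι → E → ℝ) {x : E}
    (hp : ∀ i ∈ s, ContDiffAt ℝ 2 (p i) x) (v w : E) :
    iteratedFDeriv ℝ 2 (fun y => ∑ i ∈ s, p i y) x ![v, w] =
      ∑ i ∈ s, iteratedFDeriv ℝ 2 (p i) x ![v, w] := by
  induction s using Finset.induction with
  | empty => simp [iteratedFDeriv_const_of_ne (two_ne_zero)]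
  | @insert a s' hni ih =>
    rw [Finset.sum_insert hni]
    have h1 : (fun y => ∑ i ∈ insert a s', p i y)
        = fun y => p a y + ∑ i ∈ s', p i y := by
      funext y; rw [Finset.sum_insert hni]
    rw [h1, iFD2_add (hp a (Finset.mem_insert_self a s'))
      (ContDiffAt.sum fun i hi => hp i (Finset.mem_insert_of_mem hi)) v w,
      ih fun i hi => hp i (Finset.mem_insert_of_mem hi)]

theorem key (f : E → ℝ) (h : E → EuclideanSpace ℝ (Fin m))
    (hf : ContDiff ℝ ∞ f) (hh : ContDiff ℝ ∞ h)
    (x : E) (hfeas : h x = 0) (hsurj : Function.Surjective (fderiv ℝ h x))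
    (β : ℝ) (v : E) (hv : v ∈ LinearMap.ker (fderiv ℝ h x : E →ₗ[ℝ] EuclideanSpace ℝ (Fin m))) :
    iteratedFDeriv ℝ 2 (flal f h β) x ![v, v] =
      iteratedFDeriv ℝ 2 f x ![v, v]
        - ∑ i, lam f h x i * iteratedFDeriv ℝ 2 (fun y => h y i) x ![v, v] := by
  have hvk : fderiv ℝ h x v = 0 := hv
  have hlam := lam_contDiffAt f h hf hh x hsurj
  have hlami : ∀ i, ContDiffAt ℝ 2 (fun y => lam f h y i) x := fun i =>
    ((EuclideanSpace.proj (𝕜 := ℝ) i).contDiff.contDiffAt).comp x hlam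
  have hhc : ContDiff ℝ 2 h := hh.of_le two_le_inf
  have hhi : ∀ i, ContDiffAt ℝ 2 (fun y => h y i) x := fun i =>
    ((EuclideanSpace.proj (𝕜 := ℝ) i).contDiff.contDiffAt).comp x hhc.contDiffAt
  have hhix : ∀ i, h x i = 0 := fun i => by rw [hfeas]; rfl
  have hDhi : ∀ i, fderiv ℝ (fun y => h y i) x v = 0 := by
    intro i
    have hd : fderiv ℝ (fun y => h y i) x
        = (EuclideanSpace.proj (𝕜 := ℝ) i).comp (fderiv ℝ h x) :=
      ((EuclideanSpace.proj (𝕜 := ℝ) i).hasFDerivAt.comp x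
        ((hhc.differentiable two_ne_zero x).hasFDerivAt)).fderiv
    rw [hd]
    simp [hvk]
  have hS : ContDiffAt ℝ 2 (fun y => ∑ i, lam f h y i * h y i) x :=
    ContDiffAt.sum fun i _ => (hlami i).mul (hhi i)
  have hT : ContDiffAt ℝ 2 (fun y => ∑ i, h y i * h y i) x :=
    ContDiffAt.sum fun i _ => (hhi i).mul (hhi i)
  have hfc : ContDiffAt ℝ 2 f x := hf.contDiffAt.of_le two_le_inf
  have hflal : flal f h β = fun y =>
      (f y - ∑ i, lam f h y i * h y i) + β * ∑ i, h y i * h y i := by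
    funext y
    have hn : ‖h y‖ ^ 2 = ∑ i, h y i * h y i := by
      rw [← real_inner_self_eq_norm_sq]
      simp only [PiLp.inner_apply, RCLike.inner_apply, conj_trivial]
    have hip : ⟪lam f h y, h y⟫ = ∑ i, lam f h y i * h y i := by
      simp [PiLp.inner_apply, RCLike.inner_apply, starRingEnd_apply]
      exact Finset.sum_congr rfl fun i _ => mul_comm _ _
    simp only [flal]
    rw [hn, hip]
  rw [hflal,
    iFD2_add (hfc.sub hS) ((contDiffAt_const (c := β)).mul hT) v v,
    iFD2_sub hfc hS v v,
    iFD2_const_mul hT β v v,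
    iFD2_sum Finset.univ (fun i y => lam f h y i * h y i)
      (fun i _ => (hlami i).mul (hhi i)) v v,
    iFD2_sum Finset.univ (fun i y => h y i * h y i)
      (fun i _ => (hhi i).mul (hhi i)) v v]
  have h1 : ∀ i : Fin m, iteratedFDeriv ℝ 2 (fun y => lam f h y i * h y i) x ![v, v]
      = lam f h x i * iteratedFDeriv ℝ 2 (fun y => h y i) x ![v, v] := fun i =>
    iFD2_mul (hlami i) (hhi i) v (hhix i) (hDhi i)
  have h2 : ∀ i : Fin m, iteratedFDeriv ℝ 2 (fun y => h y i * h y i) x ![v, v] = 0 := fun i => by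
    rw [iFD2_mul (hhi i) (hhi i) v (hhix i) (hDhi i), hhix i, zero_mul]
  simp only [h1, h2, Finset.sum_const_zero, mul_zero, add_zero]

end FletcherAux

theorem fletcher_hessian_restricted_to_tangent_space
    (f : E → ℝ) (h : E → EuclideanSpace ℝ (Fin m))
    (hf : ContDiff ℝ ∞ f) (hh : ContDiff ℝ ∞ h)
    (x : E) (hfeas : h x = 0) (hsurj : Function.Surjective (fderiv ℝ h x))
    (β : ℝ) (hβ : 0 ≤ β) :
    (∀ v ∈ LinearMap.ker (fderiv ℝ h x : E →ₗ[ℝ] EuclideanSpace ℝ (Fin m)),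
      iteratedFDeriv ℝ 2 (flal f h β) x ![v, v] =
        iteratedFDeriv ℝ 2 f x ![v, v]
          - ∑ i, lam f h x i * iteratedFDeriv ℝ 2 (fun y => h y i) x ![v, v]) ∧
    (∀ ε₂ : ℝ,
      (∀ v : E, iteratedFDeriv ℝ 2 (flal f h β) x ![v, v] ≥ -ε₂ * ‖v‖ ^ 2) →
      ∀ v ∈ LinearMap.ker (fderiv ℝ h x : E →ₗ[ℝ] EuclideanSpace ℝ (Fin m)),
        iteratedFDeriv ℝ 2 f x ![v, v]
          - ∑ i, lam f h x i * iteratedFDeriv ℝ 2 (fun y => h y i) x ![v, v]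
          ≥ -ε₂ * ‖v‖ ^ 2) ∧
    ((∀ v : E, v ≠ 0 → iteratedFDeriv ℝ 2 (flal f h β) x ![v, v] > 0) →
      ∀ v ∈ LinearMap.ker (fderiv ℝ h x : E →ₗ[ℝ] EuclideanSpace ℝ (Fin m)), v ≠ 0 →
        iteratedFDeriv ℝ 2 f x ![v, v]
          - ∑ i, lam f h x i * iteratedFDeriv ℝ 2 (fun y => h y i) x ![v, v] > 0) := by
  refine ⟨fun v hv => FletcherAux.key f h hf hh x hfeas hsurj β v hv, ?_, ?_⟩
  · intro ε₂ hbound v hv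
    have := hbound v
    rwa [FletcherAux.key f h hf hh x hfeas hsurj β v hv] at this
  · intro hpos v hv hv0
    have := hpos v hv0
    rwa [FletcherAux.key f h hf hh x hfeas hsurj β v hv] at this
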